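/- Let 1 < p ≤ ∞ and 1/p + 1/p' = 1. There exists a constant c_p > 0, depending only on p, such that for every n ∈ ℕ and every trigonometric polynomial t_{n−1} of degree at most n−1: ‖(V_{2n} − V_n) − t_{n−1}‖_p ≥ c_p·n^{1/p'}, where ‖f‖_p = (∫_{−π}^{π}|f(t)|^p dt)^{1/p} for p < ∞ and ‖f‖_∞ = ess sup |f|. -/

import Mathlib

open Real Finset MeasureTheory intervalIntegral

/-- The Dirichlet kernel `D_k(t) = 1/2 + Σ_{ν=1}^{k} cos(νt)`. -/
noncomputable def dirichletK (k : ℕ) (t : ℝ) : ℝ :=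
  1 / 2 + ∑ ν ∈ Finset.Icc 1 k, Real.cos ((ν : ℝ) * t)

/-- The de la Vallée Poussin kernel `V_m(t) = (1/m) Σ_{k=m}^{2m−1} D_k(t)`. -/
noncomputable def vallee (m : ℕ) (t : ℝ) : ℝ :=
  (1 / (m : ℝ)) * ∑ k ∈ Finset.Icc m (2 * m - 1), dirichletK k t

/-- A trigonometric polynomial of degree at most `m`:
`T(x) = a₀/2 + Σ_{k=1}^{m} (a_k cos kx + b_k sin kx)`. -/
def IsTrigPoly (m : ℕ) (T : ℝ → ℝ) : Prop :=
  ∃ a b : ℕ → ℝ, ∀ x : ℝ,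
    T x = a 0 / 2 + ∑ k ∈ Finset.Icc 1 m, (a k * Real.cos ((k : ℝ) * x) + b k * Real.sin ((k : ℝ) * x))

/-- The `L_q` norm (`q ∈ [1,∞]`, extended-real exponent) of a function over one period:
for finite `q` it is `(∫_{−π}^{π}|f|^q)^{1/q}`, for `q = ∞` the essential sup of `|f|`. -/
noncomputable def qnorm (q : ENNReal) (f : ℝ → ℝ) : ℝ :=
  (eLpNorm f q (volume.restrict (Set.Ioc (-π) π))).toReal



section Aux





lemma two_sin_dirichlet (k : ℕ) (t : ℝ) :
    2 * Real.sin (t/2) * dirichletK k t = Real.sin (((k : ℝ) + 1/2) * t) := by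
  induction k with
  | zero => simp [dirichletK]; ring_nf
  | succ k ih =>
    have h : dirichletK (k+1) t = dirichletK k t + Real.cos (((k:ℝ)+1) * t) := by
      rw [dirichletK, dirichletK, Finset.sum_Icc_succ_top (by omega : 1 ≤ k + 1)]
      push_cast; ring
    rw [h, mul_add, ih]
    push_cast
    rw [show ((k:ℝ)+1+1/2)*t = ((k:ℝ)+1)*t + t/2 by ring,
        show ((k:ℝ)+1/2)*t = ((k:ℝ)+1)*t - t/2 by ring,
        Real.sin_add, Real.sin_sub]
    ring

lemma fejer_identity (m : ℕ) (t : ℝ) :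
    (2 * Real.sin (t/2))^2 * ∑ k ∈ Finset.range m, dirichletK k t
      = 1 - Real.cos ((m : ℝ) * t) := by
  induction m with
  | zero => simp
  | succ m ih =>
    rw [Finset.sum_range_succ, mul_add, ih]
    have h2 : (2 * Real.sin (t/2))^2 * dirichletK m t
        = 2 * Real.sin (t/2) * Real.sin (((m:ℝ) + 1/2) * t) := by
      rw [pow_two]; rw [mul_assoc, two_sin_dirichlet]
    rw [h2]
    have : Real.cos ((m:ℝ)*t) - Real.cos (((m:ℝ)+1)*t)
        = 2 * Real.sin (t/2) * Real.sin (((m:ℝ)+1/2)*t) := by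
      rw [show ((m:ℝ))*t = ((m:ℝ)+1/2)*t - t/2 by ring,
          show ((m:ℝ)+1)*t = ((m:ℝ)+1/2)*t + t/2 by ring,
          Real.cos_sub, Real.cos_add]
      ring
    push_cast
    linarith [this]

lemma fejer_nonneg (m : ℕ) (t : ℝ) : 0 ≤ ∑ k ∈ Finset.range m, dirichletK k t := by
  rcases eq_or_ne (Real.sin (t/2)) 0 with hs | hs
  · obtain ⟨j, hj⟩ := Real.sin_eq_zero_iff.mp hs
    have ht : t = (j:ℝ) * (2*Real.pi) := by linarith
    apply Finset.sum_nonneg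
    intro k _
    have : dirichletK k t = 1/2 + k := by
      rw [dirichletK, ht]
      rw [Finset.sum_congr rfl (fun ν hν => by
        rw [show (ν:ℝ) * ((j:ℝ)*(2*Real.pi)) = ((ν*j : ℤ):ℝ) * (2*Real.pi) by push_cast; ring,
            Real.cos_int_mul_two_pi])]
      simp [Nat.card_Icc]
    rw [this]; positivity
  · have hpos : 0 < (2 * Real.sin (t/2))^2 := by positivity
    have h := fejer_identity m t
    nlinarith [Real.cos_le_one ((m:ℝ)*t), hpos, h]








noncomputable def cfun (n ν : ℕ) : ℝ :=
  ((4*n - max (2*n) ν : ℕ) : ℝ) / ((2*n : ℕ) : ℝ) - ((2*n - max n ν : ℕ) : ℝ) / (n : ℝ)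

lemma vallee_eq (m : ℕ) (hm : 1 ≤ m) (t : ℝ) :
    vallee m t = 1/2 + ∑ ν ∈ Finset.Icc 1 (2*m-1),
      (((2*m - max m ν : ℕ) : ℝ) / (m : ℝ)) * Real.cos ((ν:ℝ) * t) := by
  have hm0 : ((m:ℝ)) ≠ 0 := Nat.cast_ne_zero.mpr (by omega)
  rw [vallee]
  have hstep : ∀ k ∈ Finset.Icc m (2*m-1), dirichletK k t
      = 1/2 + ∑ ν ∈ Finset.Icc 1 (2*m-1), (if ν ≤ k then Real.cos ((ν:ℝ)*t) else 0) := by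
    intro k hk
    rw [Finset.mem_Icc] at hk
    rw [dirichletK]
    congr 1
    rw [← Finset.sum_subset (Finset.Icc_subset_Icc_right (by omega : k ≤ 2*m-1))
        (fun ν hν hν' => by
          rw [Finset.mem_Icc] at hν hν'
          rw [if_neg (by omega)])]
    exact Finset.sum_congr rfl (fun ν hν => by
      rw [Finset.mem_Icc] at hν; rw [if_pos hν.2])
  rw [Finset.sum_congr rfl hstep, Finset.sum_add_distrib, Finset.sum_const, Nat.card_Icc]
  rw [Finset.sum_comm]
  have hcnt : ∀ ν ∈ Finset.Icc 1 (2*m-1),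
      (∑ k ∈ Finset.Icc m (2*m-1), (if ν ≤ k then Real.cos ((ν:ℝ)*t) else 0))
      = ((2*m - max m ν : ℕ) : ℝ) * Real.cos ((ν:ℝ)*t) := by
    intro ν hν
    rw [Finset.mem_Icc] at hν
    rw [← Finset.sum_filter]
    have hfil : (Finset.Icc m (2*m-1)).filter (fun k => ν ≤ k) = Finset.Icc (max m ν) (2*m-1) := by
      ext k; simp only [Finset.mem_filter, Finset.mem_Icc]; omega
    rw [hfil, Finset.sum_const, Nat.card_Icc, nsmul_eq_mul]
    congr 2
    omega
  rw [Finset.sum_congr rfl hcnt]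
  have hcard : (2*m-1+1-m) = m := by omega
  rw [hcard, mul_add, Finset.mul_sum]
  congr 1
  · rw [nsmul_eq_mul]; field_simp
  · exact Finset.sum_congr rfl (fun ν _ => by rw [mul_comm (1/(m:ℝ))]; ring)

lemma vallee_diff_eq (n : ℕ) (hn : 1 ≤ n) (t : ℝ) :
    vallee (2*n) t - vallee n t
      = ∑ ν ∈ Finset.Icc 1 (4*n-1), cfun n ν * Real.cos ((ν:ℝ)*t) := by
  rw [vallee_eq (2*n) (by omega), vallee_eq n hn]
  have h1 : 2*(2*n) = 4*n := by ring
  rw [h1]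
  have h2 : ∑ ν ∈ Finset.Icc 1 (2*n-1), (((2*n - max n ν : ℕ):ℝ)/(n:ℝ)) * Real.cos ((ν:ℝ)*t)
      = ∑ ν ∈ Finset.Icc 1 (4*n-1), (((2*n - max n ν : ℕ):ℝ)/(n:ℝ)) * Real.cos ((ν:ℝ)*t) := by
    apply Finset.sum_subset (Finset.Icc_subset_Icc_right (by omega))
    intro ν hν hν'
    rw [Finset.mem_Icc] at hν hν'
    have : 2*n - max n ν = 0 := by omega
    rw [this]
    simp
  rw [h2]
  have h3 : ∀ A B C : ℝ, (1/2 + A) - (1/2 + B) = A - B := by intros; ring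
  rw [h3 _ _ 0, ← Finset.sum_sub_distrib]
  exact Finset.sum_congr rfl (fun ν _ => by rw [cfun]; push_cast; ring)

lemma cfun_abs_le (n ν : ℕ) (hn : 1 ≤ n) : |cfun n ν| ≤ 1 := by
  have h1 : (0:ℝ) ≤ ((4*n - max (2*n) ν : ℕ):ℝ)/((2*n:ℕ):ℝ) := by positivity
  have h2 : (0:ℝ) ≤ ((2*n - max n ν : ℕ):ℝ)/(n:ℝ) := by positivity
  have h3 : ((4*n - max (2*n) ν : ℕ):ℝ)/((2*n:ℕ):ℝ) ≤ 1 := by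
    rw [div_le_one (by positivity : (0:ℝ) < ((2*n:ℕ):ℝ))]
    exact_mod_cast (by omega : 4*n - max (2*n) ν ≤ 2*n)
  have h4 : ((2*n - max n ν : ℕ):ℝ)/(n:ℝ) ≤ 1 := by
    rw [div_le_one (by exact_mod_cast (by omega : 0 < n))]
    exact_mod_cast (by omega : 2*n - max n ν ≤ n)
  rw [cfun, abs_sub_le_iff]
  constructor <;> linarith

lemma cfun_eq_zero (n ν : ℕ) (hn : 1 ≤ n) (hν : ν ≤ n) : cfun n ν = 0 := by
  rw [cfun, max_eq_left (by omega : ν ≤ 2*n), max_eq_left hν,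
      (by omega : 4*n - 2*n = 2*n), (by omega : 2*n - n = n)]
  rw [div_self (by exact_mod_cast (by omega : (2*n:ℕ) ≠ 0)),
      div_self (by exact_mod_cast (by omega : n ≠ 0))]
  ring

lemma cfun_half (n ν : ℕ) (hn : 1 ≤ n) (h1 : 2*n ≤ ν) (h2 : ν ≤ 3*n) : 1/2 ≤ cfun n ν := by
  rw [cfun, max_eq_right h1, max_eq_right (by omega : n ≤ ν),
      (by omega : 2*n - ν = 0)]
  simp only [Nat.cast_zero, zero_div, sub_zero]
  rw [le_div_iff₀ (by positivity : (0:ℝ) < ((2*n:ℕ):ℝ))]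
  have : (n:ℝ) ≤ ((4*n - ν : ℕ):ℝ) := by exact_mod_cast (by omega : n ≤ 4*n - ν)
  push_cast
  push_cast at this
  linarith


lemma int_cos_nat (k : ℕ) (hk : 1 ≤ k) : ∫ t in (-π)..π, Real.cos ((k:ℝ)*t) = 0 := by
  have hk0 : ((k:ℝ)) ≠ 0 := Nat.cast_ne_zero.mpr (by omega)
  rw [intervalIntegral.integral_comp_mul_left (fun x => Real.cos x) hk0, integral_cos]
  rw [show (k:ℝ) * -π = -(k * π) by ring, Real.sin_neg, Real.sin_nat_mul_pi]
  simp

lemma int_sin_nat (k : ℕ) : ∫ t in (-π)..π, Real.sin ((k:ℝ)*t) = 0 := by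
  rcases Nat.eq_zero_or_pos k with h | h
  · simp [h]
  have hk0 : ((k:ℝ)) ≠ 0 := Nat.cast_ne_zero.mpr (by omega)
  rw [intervalIntegral.integral_comp_mul_left (fun x => Real.sin x) hk0, integral_sin]
  rw [show (k:ℝ) * -π = -(k * π) by ring, Real.cos_neg]
  simp

lemma int_cos_sq_nat (k : ℕ) (hk : 1 ≤ k) : ∫ t in (-π)..π, Real.cos ((k:ℝ)*t)^2 = π := by
  have hk0 : ((k:ℝ)) ≠ 0 := Nat.cast_ne_zero.mpr (by omega)
  have hkpos : (0:ℝ) < k := by exact_mod_cast (by omega : 0 < k)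
  rw [intervalIntegral.integral_comp_mul_left (fun x => Real.cos x ^ 2) hk0, integral_cos_sq]
  rw [show (k:ℝ) * -π = -(k * π) by ring, Real.sin_neg, Real.cos_neg, Real.sin_nat_mul_pi]
  rw [smul_eq_mul]; field_simp; ring

lemma int_cos_cos (j k : ℕ) (hj : 1 ≤ j) (hk : 1 ≤ k) :
    ∫ t in (-π)..π, Real.cos ((j:ℝ)*t) * Real.cos ((k:ℝ)*t)
      = if j = k then π else 0 := by
  rcases eq_or_ne j k with h | h
  · subst h
    rw [if_pos rfl]
    have := intervalIntegral.integral_congr (a := -π) (b := π) (μ := volume)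
      (f := fun t => Real.cos ((j:ℝ)*t) * Real.cos ((j:ℝ)*t))
      (g := fun t => Real.cos ((j:ℝ)*t)^2) (fun t _ => (sq (Real.cos ((j:ℝ)*t))).symm)
    rw [this]
    exact int_cos_sq_nat j hj
  · rw [if_neg h]
    wlog hjk : j < k generalizing j k
    · have hkj : k < j := by omega
      have := this k j hk hj (Ne.symm h) hkj
      rw [← this]
      exact intervalIntegral.integral_congr (fun t _ => mul_comm _ _)
    have key : ∀ t:ℝ, Real.cos ((j:ℝ)*t) * Real.cos ((k:ℝ)*t)
        = (Real.cos (((k-j : ℕ):ℝ)*t) + Real.cos (((k+j : ℕ):ℝ)*t))/2 := by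
      intro t
      have h1 : ((k-j:ℕ):ℝ) = (k:ℝ) - j := by
        push_cast [Nat.cast_sub (le_of_lt hjk)]; ring
      rw [h1]
      push_cast
      rw [show ((k:ℝ)-j)*t = (k:ℝ)*t - j*t by ring, show ((k:ℝ)+j)*t = (k:ℝ)*t + j*t by ring,
          Real.cos_sub, Real.cos_add]
      ring
    rw [intervalIntegral.integral_congr (fun t _ => key t)]
    have h2 : ∀ t:ℝ, (Real.cos (((k-j:ℕ):ℝ)*t) + Real.cos (((k+j:ℕ):ℝ)*t))/2
        = (1/2) * Real.cos (((k-j:ℕ):ℝ)*t) + (1/2) * Real.cos (((k+j:ℕ):ℝ)*t) := by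
      intro t; ring
    rw [intervalIntegral.integral_congr (fun t _ => h2 t)]
    rw [intervalIntegral.integral_add, intervalIntegral.integral_const_mul,
        intervalIntegral.integral_const_mul, int_cos_nat _ (by omega), int_cos_nat _ (by omega)]
    · ring
    · exact (continuous_const.mul (by continuity)).intervalIntegrable _ _
    · exact (continuous_const.mul (by continuity)).intervalIntegrable _ _

lemma int_odd_zero (f : ℝ → ℝ) (hf : Continuous f) (hodd : ∀ t, f (-t) = - f t) :
    ∫ t in (-π)..π, f t = 0 := by
  have h1 : ∫ t in (-π)..π, f (-t) = ∫ t in (-π)..π, f t := by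
    rw [intervalIntegral.integral_comp_neg f]
    norm_num
  have h2 : ∫ t in (-π)..π, f (-t) = - ∫ t in (-π)..π, f t := by
    rw [intervalIntegral.integral_congr (fun t _ => hodd t), intervalIntegral.integral_neg]
  linarith [h1, h2]

lemma int_sin_cos (j k : ℕ) :
    ∫ t in (-π)..π, Real.sin ((j:ℝ)*t) * Real.cos ((k:ℝ)*t) = 0 := by
  apply int_odd_zero _ (by continuity)
  intro t
  rw [show (j:ℝ) * -t = -(j*t) by ring, show (k:ℝ) * -t = -(k*t) by ring,
      Real.sin_neg, Real.cos_neg]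
  ring
section P4
variable (n : ℕ)

lemma continuous_dirichletK (k : ℕ) : Continuous (dirichletK k) := by
  unfold dirichletK
  exact continuous_const.add (continuous_finset_sum _ fun ν _ =>
    (Real.continuous_cos.comp (continuous_const.mul continuous_id)))

lemma continuous_vallee (m : ℕ) : Continuous (vallee m) := by
  unfold vallee
  exact continuous_const.mul (continuous_finset_sum _ fun k _ => continuous_dirichletK k)

lemma integral_f_cos (hn : 1 ≤ n) (ν : ℕ) (hν : ν ∈ Finset.Icc 1 (4*n-1)) :
    ∫ t in (-π)..π, (vallee (2*n) t - vallee n t) * Real.cos ((ν:ℝ)*t)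
      = π * cfun n ν := by
  rw [Finset.mem_Icc] at hν
  have hcos : ∀ k : ℕ, Continuous (fun t : ℝ => Real.cos ((k:ℝ)*t)) :=
    fun k => Real.continuous_cos.comp (continuous_const.mul continuous_id)
  have hcong : ∀ t ∈ Set.uIcc (-π) π, (vallee (2*n) t - vallee n t) * Real.cos ((ν:ℝ)*t)
      = ∑ μ ∈ Finset.Icc 1 (4*n-1), cfun n μ * (Real.cos ((μ:ℝ)*t) * Real.cos ((ν:ℝ)*t)) := by
    intro t _
    rw [vallee_diff_eq n hn t, Finset.sum_mul]
    exact Finset.sum_congr rfl (fun μ _ => by ring)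
  rw [intervalIntegral.integral_congr hcong, intervalIntegral.integral_finset_sum
    (fun μ _ => (id (continuous_const.mul ((hcos μ).mul (hcos ν))) : Continuous fun t =>
      cfun n μ * (Real.cos ((μ:ℝ)*t) * Real.cos ((ν:ℝ)*t))).intervalIntegrable _ _)]
  have hterm : ∀ μ ∈ Finset.Icc 1 (4*n-1),
      (∫ t in (-π)..π, cfun n μ * (Real.cos ((μ:ℝ)*t) * Real.cos ((ν:ℝ)*t)))
      = if μ = ν then cfun n μ * π else 0 := by
    intro μ hμ
    rw [Finset.mem_Icc] at hμ
    rw [intervalIntegral.integral_const_mul, int_cos_cos μ ν (by omega) (by omega)]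
    split_ifs with h
    · rfl
    · ring
  rw [Finset.sum_congr rfl hterm, Finset.sum_ite_eq' (Finset.Icc 1 (4*n-1)) ν
    (fun μ => cfun n μ * π)]
  rw [if_pos (Finset.mem_Icc.mpr hν)]
  ring

lemma integral_T_cos (a b : ℕ → ℝ) (ν : ℕ) (hν1 : 1 ≤ ν) (hν : n ≤ ν) :
    ∫ t in (-π)..π, (a 0 / 2 + ∑ k ∈ Finset.Icc 1 (n-1),
        (a k * Real.cos ((k:ℝ)*t) + b k * Real.sin ((k:ℝ)*t))) * Real.cos ((ν:ℝ)*t) = 0 := by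
  have hcong : ∀ t ∈ Set.uIcc (-π) π, (a 0 / 2 + ∑ k ∈ Finset.Icc 1 (n-1),
        (a k * Real.cos ((k:ℝ)*t) + b k * Real.sin ((k:ℝ)*t))) * Real.cos ((ν:ℝ)*t)
      = (a 0 / 2) * Real.cos ((ν:ℝ)*t) + ∑ k ∈ Finset.Icc 1 (n-1),
          (a k * (Real.cos ((k:ℝ)*t) * Real.cos ((ν:ℝ)*t))
            + b k * (Real.sin ((k:ℝ)*t) * Real.cos ((ν:ℝ)*t))) := by
    intro t _
    rw [add_mul, Finset.sum_mul]
    congr 1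
    exact Finset.sum_congr rfl (fun k _ => by ring)
  rw [intervalIntegral.integral_congr hcong]
  have hcos : ∀ k : ℕ, Continuous (fun t : ℝ => Real.cos ((k:ℝ)*t)) :=
    fun k => Real.continuous_cos.comp (continuous_const.mul continuous_id)
  have hsin : ∀ k : ℕ, Continuous (fun t : ℝ => Real.sin ((k:ℝ)*t)) :=
    fun k => Real.continuous_sin.comp (continuous_const.mul continuous_id)
  rw [intervalIntegral.integral_add ((id (continuous_const.mul (hcos ν)) : Continuous fun t =>
      a 0 / 2 * Real.cos ((ν:ℝ)*t)).intervalIntegrable _ _)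
    ((id (continuous_finset_sum _ (fun k _ => (continuous_const.mul ((hcos k).mul (hcos ν))).add
      (continuous_const.mul ((hsin k).mul (hcos ν))))) : Continuous fun t =>
      ∑ k ∈ Finset.Icc 1 (n-1), (a k * (Real.cos ((k:ℝ)*t) * Real.cos ((ν:ℝ)*t))
        + b k * (Real.sin ((k:ℝ)*t) * Real.cos ((ν:ℝ)*t)))).intervalIntegrable _ _)]
  rw [intervalIntegral.integral_const_mul, int_cos_nat ν hν1, mul_zero]
  rw [intervalIntegral.integral_finset_sum (fun k _ =>
    (id ((continuous_const.mul ((hcos k).mul (hcos ν))).add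
      (continuous_const.mul ((hsin k).mul (hcos ν)))) : Continuous fun t =>
      a k * (Real.cos ((k:ℝ)*t) * Real.cos ((ν:ℝ)*t))
        + b k * (Real.sin ((k:ℝ)*t) * Real.cos ((ν:ℝ)*t))).intervalIntegrable _ _)]
  rw [zero_add]
  apply Finset.sum_eq_zero
  intro k hk
  rw [Finset.mem_Icc] at hk
  rw [intervalIntegral.integral_add ((id (continuous_const.mul ((hcos k).mul (hcos ν))) : Continuous fun t =>
      a k * (Real.cos ((k:ℝ)*t) * Real.cos ((ν:ℝ)*t))).intervalIntegrable _ _)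
    ((id (continuous_const.mul ((hsin k).mul (hcos ν))) : Continuous fun t =>
      b k * (Real.sin ((k:ℝ)*t) * Real.cos ((ν:ℝ)*t))).intervalIntegrable _ _),
    intervalIntegral.integral_const_mul, intervalIntegral.integral_const_mul,
    int_cos_cos k ν (by omega) (by omega), int_sin_cos k ν, if_neg (by omega)]
  ring

lemma pairing (hn : 1 ≤ n) (a b : ℕ → ℝ) :
    ∫ t in (-π)..π, ((vallee (2*n) t - vallee n t) - (a 0 / 2 + ∑ k ∈ Finset.Icc 1 (n-1),
        (a k * Real.cos ((k:ℝ)*t) + b k * Real.sin ((k:ℝ)*t))))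
        * (vallee (2*n) t - vallee n t)
      = π * ∑ ν ∈ Finset.Icc 1 (4*n-1), (cfun n ν)^2 := by
  set T : ℝ → ℝ := fun t => a 0 / 2 + ∑ k ∈ Finset.Icc 1 (n-1),
      (a k * Real.cos ((k:ℝ)*t) + b k * Real.sin ((k:ℝ)*t)) with hTdef
  have hcos : ∀ k : ℕ, Continuous (fun t : ℝ => Real.cos ((k:ℝ)*t)) :=
    fun k => Real.continuous_cos.comp (continuous_const.mul continuous_id)
  have hsin : ∀ k : ℕ, Continuous (fun t : ℝ => Real.sin ((k:ℝ)*t)) :=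
    fun k => Real.continuous_sin.comp (continuous_const.mul continuous_id)
  have hTc : Continuous T :=
    continuous_const.add (continuous_finset_sum _ (fun k _ =>
      (continuous_const.mul (hcos k)).add (continuous_const.mul (hsin k))))
  have hFc : Continuous (fun t => vallee (2*n) t - vallee n t) :=
    (continuous_vallee (2*n)).sub (continuous_vallee n)
  have hcong : ∀ t ∈ Set.uIcc (-π) π,
      ((vallee (2*n) t - vallee n t) - T t) * (vallee (2*n) t - vallee n t)
      = ∑ ν ∈ Finset.Icc 1 (4*n-1), cfun n ν
          * (((vallee (2*n) t - vallee n t) - T t) * Real.cos ((ν:ℝ)*t)) := by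
    intro t _
    nth_rewrite 2 [vallee_diff_eq n hn t]
    rw [Finset.mul_sum]
    exact Finset.sum_congr rfl (fun ν _ => by ring)
  rw [intervalIntegral.integral_congr hcong, intervalIntegral.integral_finset_sum
    (fun ν _ => (id (continuous_const.mul ((hFc.sub hTc).mul (hcos ν))) : Continuous fun t =>
      cfun n ν * (((vallee (2*n) t - vallee n t) - T t) * Real.cos ((ν:ℝ)*t))).intervalIntegrable _ _)]
  have hterm : ∀ ν ∈ Finset.Icc 1 (4*n-1),
      (∫ t in (-π)..π, cfun n ν * (((vallee (2*n) t - vallee n t) - T t) * Real.cos ((ν:ℝ)*t)))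
      = π * (cfun n ν)^2 := by
    intro ν hν
    have hν' := Finset.mem_Icc.mp hν
    rw [intervalIntegral.integral_const_mul]
    have hsplit : (∫ t in (-π)..π, ((vallee (2*n) t - vallee n t) - T t) * Real.cos ((ν:ℝ)*t))
        = (∫ t in (-π)..π, (vallee (2*n) t - vallee n t) * Real.cos ((ν:ℝ)*t))
          - ∫ t in (-π)..π, T t * Real.cos ((ν:ℝ)*t) := by
      rw [← intervalIntegral.integral_sub ((id (hFc.mul (hcos ν)) : Continuous fun t =>
          (vallee (2*n) t - vallee n t) * Real.cos ((ν:ℝ)*t)).intervalIntegrable _ _)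
        ((id (hTc.mul (hcos ν)) : Continuous fun t => T t * Real.cos ((ν:ℝ)*t)).intervalIntegrable _ _)]
      exact intervalIntegral.integral_congr (fun t _ => by ring)
    rw [hsplit, integral_f_cos n hn ν hν]
    rcases le_or_gt n ν with hcase | hcase
    · rw [integral_T_cos n a b ν (by omega) hcase]
      ring
    · rw [cfun_eq_zero n ν hn (by omega)]
      ring
  rw [Finset.sum_congr rfl hterm, ← Finset.mul_sum]

end P4
section P5

lemma int_dirichletK (k : ℕ) : ∫ t in (-π)..π, dirichletK k t = π := by
  have hcos : ∀ j : ℕ, Continuous (fun t : ℝ => Real.cos ((j:ℝ)*t)) :=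
    fun j => Real.continuous_cos.comp (continuous_const.mul continuous_id)
  unfold dirichletK
  rw [intervalIntegral.integral_add ((continuous_const).intervalIntegrable _ _)
    ((continuous_finset_sum _ (fun ν _ => hcos ν)).intervalIntegrable _ _)]
  rw [intervalIntegral.integral_const, intervalIntegral.integral_finset_sum
    (fun ν _ => (hcos ν).intervalIntegrable _ _)]
  rw [Finset.sum_congr rfl (fun ν hν => int_cos_nat ν (Finset.mem_Icc.mp hν).1)]
  simp
  ring

lemma int_fejer (m : ℕ) : ∫ t in (-π)..π, (∑ k ∈ Finset.range m, dirichletK k t) = m * π := by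
  rw [intervalIntegral.integral_finset_sum
    (fun k _ => (continuous_dirichletK k).intervalIntegrable _ _)]
  rw [Finset.sum_congr rfl (fun k _ => int_dirichletK k)]
  simp

lemma vallee_fejer (m : ℕ) (hm : 1 ≤ m) (t : ℝ) :
    vallee m t = (1/(m:ℝ)) * ((∑ k ∈ Finset.range (2*m), dirichletK k t)
      - ∑ k ∈ Finset.range m, dirichletK k t) := by
  rw [vallee]
  congr 1
  have h1 : Finset.Icc m (2*m-1) = Finset.Ico m (2*m) := by
    ext k; simp only [Finset.mem_Icc, Finset.mem_Ico]; omega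
  rw [h1, Finset.sum_Ico_eq_sub _ (by omega : m ≤ 2*m)]

lemma f_decomp (n : ℕ) (hn : 1 ≤ n) (t : ℝ) :
    vallee (2*n) t - vallee n t
      = (1/((2*n:ℕ):ℝ)) * (∑ k ∈ Finset.range (4*n), dirichletK k t)
        - (3/((2*n:ℕ):ℝ)) * (∑ k ∈ Finset.range (2*n), dirichletK k t)
        + (1/(n:ℝ)) * (∑ k ∈ Finset.range n, dirichletK k t) := by
  rw [vallee_fejer (2*n) (by omega) t, vallee_fejer n hn t]
  have h1 : 2*(2*n) = 4*n := by ring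
  rw [h1]
  have hn0 : ((n:ℝ)) ≠ 0 := Nat.cast_ne_zero.mpr (by omega)
  have h2n : (((2*n:ℕ)):ℝ) = 2*(n:ℝ) := by push_cast; ring
  rw [h2n]
  field_simp
  ring

lemma f_L1_bound (n : ℕ) (hn : 1 ≤ n) :
    ∫ t in (-π)..π, |vallee (2*n) t - vallee n t| ≤ 6 * π := by
  have hn0 : (0:ℝ) < (n:ℝ) := by exact_mod_cast (by omega : 0 < n)
  set g : ℝ → ℝ := fun t =>
    (1/((2*n:ℕ):ℝ)) * (∑ k ∈ Finset.range (4*n), dirichletK k t)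
      + (3/((2*n:ℕ):ℝ)) * (∑ k ∈ Finset.range (2*n), dirichletK k t)
      + (1/(n:ℝ)) * (∑ k ∈ Finset.range n, dirichletK k t) with hg
  have h2n : (((2*n:ℕ)):ℝ) = 2*(n:ℝ) := by push_cast; ring
  have hSc : ∀ m : ℕ, Continuous (fun t => ∑ k ∈ Finset.range m, dirichletK k t) :=
    fun m => continuous_finset_sum _ (fun k _ => continuous_dirichletK k)
  have hgc : Continuous g := by
    apply Continuous.add
    apply Continuous.add
    · exact continuous_const.mul (hSc (4*n))
    · exact continuous_const.mul (hSc (2*n))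
    · exact continuous_const.mul (hSc n)
  have hFc : Continuous (fun t => vallee (2*n) t - vallee n t) :=
    (continuous_vallee (2*n)).sub (continuous_vallee n)
  have hbound : ∀ t, |vallee (2*n) t - vallee n t| ≤ g t := by
    intro t
    rw [f_decomp n hn t, abs_le]
    have p1 := fejer_nonneg (4*n) t
    have p2 := fejer_nonneg (2*n) t
    have p3 := fejer_nonneg n t
    have c1 : (0:ℝ) < 1/((2*n:ℕ):ℝ) := by rw [h2n]; positivity
    have c2 : (0:ℝ) < 3/((2*n:ℕ):ℝ) := by rw [h2n]; positivity
    have c3 : (0:ℝ) < 1/(n:ℝ) := by positivity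
    constructor <;> rw [hg] <;> dsimp only <;> nlinarith
  have hint : ∫ t in (-π)..π, g t = 6 * π := by
    rw [hg]
    rw [intervalIntegral.integral_add ((id ((continuous_const.mul (hSc (4*n))).add
      (continuous_const.mul (hSc (2*n)))) : Continuous fun t =>
        (1/((2*n:ℕ):ℝ)) * (∑ k ∈ Finset.range (4*n), dirichletK k t)
        + (3/((2*n:ℕ):ℝ)) * (∑ k ∈ Finset.range (2*n), dirichletK k t)).intervalIntegrable _ _)
      ((id (continuous_const.mul (hSc n)) : Continuous fun t =>
        (1/(n:ℝ)) * (∑ k ∈ Finset.range n, dirichletK k t)).intervalIntegrable _ _),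
      intervalIntegral.integral_add ((id (continuous_const.mul (hSc (4*n))) : Continuous fun t =>
        (1/((2*n:ℕ):ℝ)) * (∑ k ∈ Finset.range (4*n), dirichletK k t)).intervalIntegrable _ _)
      ((id (continuous_const.mul (hSc (2*n))) : Continuous fun t =>
        (3/((2*n:ℕ):ℝ)) * (∑ k ∈ Finset.range (2*n), dirichletK k t)).intervalIntegrable _ _),
      intervalIntegral.integral_const_mul, intervalIntegral.integral_const_mul,
      intervalIntegral.integral_const_mul, int_fejer, int_fejer, int_fejer, h2n]
    push_cast
    field_simp
    ring
  calc ∫ t in (-π)..π, |vallee (2*n) t - vallee n t|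
      ≤ ∫ t in (-π)..π, g t := by
        apply intervalIntegral.integral_mono_on
          (by linarith [Real.pi_pos] : -π ≤ π)
          ((hFc.abs).intervalIntegrable _ _) (hgc.intervalIntegrable _ _)
          (fun t _ => hbound t)
    _ = 6 * π := hint

lemma f_sup_bound (n : ℕ) (hn : 1 ≤ n) (t : ℝ) :
    |vallee (2*n) t - vallee n t| ≤ 4*n := by
  rw [vallee_diff_eq n hn t]
  calc |∑ ν ∈ Finset.Icc 1 (4*n-1), cfun n ν * Real.cos ((ν:ℝ)*t)|
      ≤ ∑ ν ∈ Finset.Icc 1 (4*n-1), |cfun n ν * Real.cos ((ν:ℝ)*t)| :=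
        Finset.abs_sum_le_sum_abs _ _
    _ ≤ ∑ ν ∈ Finset.Icc 1 (4*n-1), 1 := by
        apply Finset.sum_le_sum
        intro ν _
        rw [abs_mul]
        calc |cfun n ν| * |Real.cos ((ν:ℝ)*t)| ≤ 1 * 1 :=
          mul_le_mul (cfun_abs_le n ν hn) (Real.abs_cos_le_one _) (abs_nonneg _) zero_le_one
        _ = 1 := one_mul 1
    _ ≤ 4*n := by
        rw [Finset.sum_const, Nat.card_Icc, nsmul_eq_mul, mul_one]
        exact_mod_cast (by omega : 4*n-1+1-1 ≤ 4*n)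

lemma sum_sq_lower (n : ℕ) (hn : 1 ≤ n) :
    (n:ℝ)/4 ≤ ∑ ν ∈ Finset.Icc 1 (4*n-1), (cfun n ν)^2 := by
  have hsub : Finset.Icc (2*n) (3*n) ⊆ Finset.Icc 1 (4*n-1) := by
    apply Finset.Icc_subset_Icc <;> omega
  have h1 : ∑ ν ∈ Finset.Icc (2*n) (3*n), (cfun n ν)^2
      ≤ ∑ ν ∈ Finset.Icc 1 (4*n-1), (cfun n ν)^2 :=
    Finset.sum_le_sum_of_subset_of_nonneg hsub (fun ν _ _ => sq_nonneg _)
  have h2 : ∀ ν ∈ Finset.Icc (2*n) (3*n), (1/4 : ℝ) ≤ (cfun n ν)^2 := by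
    intro ν hν
    rw [Finset.mem_Icc] at hν
    have := cfun_half n ν hn hν.1 hν.2
    nlinarith
  have h4 := Finset.sum_le_sum h2
  rw [Finset.sum_const, Nat.card_Icc, nsmul_eq_mul] at h4
  have h5 : (n:ℝ) ≤ ((3*n+1-2*n : ℕ):ℝ) := by exact_mod_cast (by omega : n ≤ 3*n+1-2*n)
  linarith

end P5

lemma measure_finite : IsFiniteMeasure (volume.restrict (Set.Ioc (-π) π)) := by
  constructor
  rw [Measure.restrict_apply_univ]
  exact measure_Ioc_lt_top

lemma T_bound (n : ℕ) (a b : ℕ → ℝ) (x : ℝ) :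
    |a 0 / 2 + ∑ k ∈ Finset.Icc 1 (n-1), (a k * Real.cos ((k:ℝ)*x) + b k * Real.sin ((k:ℝ)*x))|
      ≤ |a 0|/2 + ∑ k ∈ Finset.Icc 1 (n-1), (|a k| + |b k|) := by
  calc |a 0 / 2 + ∑ k ∈ Finset.Icc 1 (n-1), (a k * Real.cos ((k:ℝ)*x) + b k * Real.sin ((k:ℝ)*x))|
      ≤ |a 0 / 2| + |∑ k ∈ Finset.Icc 1 (n-1), (a k * Real.cos ((k:ℝ)*x) + b k * Real.sin ((k:ℝ)*x))| :=
        abs_add_le _ _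
    _ ≤ |a 0|/2 + ∑ k ∈ Finset.Icc 1 (n-1), (|a k| + |b k|) := by
        apply add_le_add
        · rw [abs_div]; simp
        · refine (Finset.abs_sum_le_sum_abs _ _).trans (Finset.sum_le_sum fun k _ => ?_)
          calc |a k * Real.cos ((k:ℝ)*x) + b k * Real.sin ((k:ℝ)*x)|
              ≤ |a k * Real.cos ((k:ℝ)*x)| + |b k * Real.sin ((k:ℝ)*x)| := abs_add_le _ _
            _ ≤ |a k| + |b k| := by
                rw [abs_mul, abs_mul]
                have h1 := Real.abs_cos_le_one ((k:ℝ)*x)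
                have h2 := Real.abs_sin_le_one ((k:ℝ)*x)
                have h3 := abs_nonneg (a k)
                have h4 := abs_nonneg (b k)
                nlinarith

end Aux

/-- Let `1 < p ≤ ∞` and `1/p + 1/p' = 1`.  There is a constant `c_p > 0`
depending only on `p` such that for every `n ≥ 1` and every trigonometric polynomial
`T` of degree at most `n−1`: `‖(V_{2n} − V_n) − T‖_p ≥ c_p·n^{1/p'}`. -/
theorem vallee_diff_far_from_trigpoly_Lp (p : ENNReal) (hp : 1 < p) (p' : ℝ)
    (hpp' : 1 / p.toReal + 1 / p' = 1) :
    ∃ c : ℝ, 0 < c ∧ ∀ n : ℕ, 1 ≤ n → ∀ T : ℝ → ℝ, IsTrigPoly (n - 1) T →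
      c * (n : ℝ) ^ (1 / p') ≤ qnorm p (fun t => vallee (2 * n) t - vallee n t - T t) := by
  haveI : IsFiniteMeasure (volume.restrict (Set.Ioc (-π) π)) := measure_finite
  have hle : -π ≤ π := by linarith [Real.pi_pos]
  have hπ := Real.pi_pos
  -- Common facts for a given n, T
  have common : ∀ n : ℕ, 1 ≤ n → ∀ T : ℝ → ℝ, IsTrigPoly (n - 1) T →
      (π * n / 4 ≤ ∫ t, (vallee (2*n) t - vallee n t - T t) * (vallee (2*n) t - vallee n t)
          ∂(volume.restrict (Set.Ioc (-π) π)))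
      ∧ Continuous (fun t => vallee (2*n) t - vallee n t - T t)
      ∧ (∃ C : ℝ, ∀ x, |vallee (2*n) x - vallee n x - T x| ≤ C) := by
    intro n hn T hT
    obtain ⟨a, b, hTx⟩ := hT
    have hcos : ∀ k : ℕ, Continuous (fun t : ℝ => Real.cos ((k:ℝ)*t)) :=
      fun k => Real.continuous_cos.comp (continuous_const.mul continuous_id)
    have hsin : ∀ k : ℕ, Continuous (fun t : ℝ => Real.sin ((k:ℝ)*t)) :=
      fun k => Real.continuous_sin.comp (continuous_const.mul continuous_id)
    have hTeq : T = fun x => a 0 / 2 + ∑ k ∈ Finset.Icc 1 (n-1),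
        (a k * Real.cos ((k:ℝ)*x) + b k * Real.sin ((k:ℝ)*x)) := funext hTx
    have hTc : Continuous T := by
      rw [hTeq]
      exact continuous_const.add (continuous_finset_sum _ (fun k _ =>
        (continuous_const.mul (hcos k)).add (continuous_const.mul (hsin k))))
    have hFc : Continuous (fun t => vallee (2*n) t - vallee n t) :=
      (continuous_vallee (2*n)).sub (continuous_vallee n)
    refine ⟨?_, (hFc.sub hTc), ?_⟩
    · have heq : ∫ t, (vallee (2*n) t - vallee n t - T t) * (vallee (2*n) t - vallee n t)
          ∂(volume.restrict (Set.Ioc (-π) π))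
          = π * ∑ ν ∈ Finset.Icc 1 (4*n-1), (cfun n ν)^2 := by
        rw [← intervalIntegral.integral_of_le hle, ← pairing n hn a b]
        exact intervalIntegral.integral_congr (fun t _ => by rw [hTx t])
      rw [heq]
      have := sum_sq_lower n hn
      nlinarith
    · refine ⟨4*n + (|a 0|/2 + ∑ k ∈ Finset.Icc 1 (n-1), (|a k| + |b k|)), fun x => ?_⟩
      calc |vallee (2*n) x - vallee n x - T x|
          ≤ |vallee (2*n) x - vallee n x| + |T x| := abs_sub _ _
        _ ≤ 4*n + (|a 0|/2 + ∑ k ∈ Finset.Icc 1 (n-1), (|a k| + |b k|)) := by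
            apply add_le_add (f_sup_bound n hn x)
            rw [hTx x]
            exact T_bound n a b x
  rcases eq_or_ne p ⊤ with hptop | hptop
  · -- p = ∞, p' = 1
    subst hptop
    have hp'1 : p' = 1 := by
      rw [ENNReal.toReal_top, div_zero, zero_add, one_div] at hpp'
      exact inv_eq_one.mp hpp'
    refine ⟨1/24, by norm_num, ?_⟩
    intro n hn T hT
    obtain ⟨hlow, hhc, C, hC⟩ := common n hn T hT
    have hn0 : (0:ℝ) < n := by exact_mod_cast (by omega : 0 < n)
    have hFc : Continuous (fun t => vallee (2*n) t - vallee n t) :=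
      (continuous_vallee (2*n)).sub (continuous_vallee n)
    set μ := volume.restrict (Set.Ioc (-π) π) with hμ
    set E := eLpNormEssSup (fun t => vallee (2*n) t - vallee n t - T t) μ with hE
    have hEle : E ≤ ENNReal.ofReal C :=
      eLpNormEssSup_le_of_ae_bound (ae_of_all _ (fun x => by
        rw [Real.norm_eq_abs]; exact hC x))
    have hEne : E ≠ ⊤ := ne_top_of_le_ne_top ENNReal.ofReal_ne_top hEle
    have hqnorm : qnorm ⊤ (fun t => vallee (2*n) t - vallee n t - T t) = E.toReal := by
      rw [qnorm, eLpNorm_exponent_top]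
    have hae : ∀ᵐ x ∂μ, |vallee (2*n) x - vallee n x - T x| ≤ E.toReal := by
      filter_upwards [ae_le_eLpNormEssSup
        (f := fun t => vallee (2*n) t - vallee n t - T t) (μ := μ)] with x hx
      have h2 := ENNReal.toReal_mono hEne hx
      simpa [Real.norm_eq_abs] using h2
    have hInt1 : Integrable (fun t => (vallee (2*n) t - vallee n t - T t)
        * (vallee (2*n) t - vallee n t)) μ := (hhc.mul hFc).integrableOn_Ioc
    have hInt2 : Integrable (fun t => E.toReal * |vallee (2*n) t - vallee n t|) μ :=
      (continuous_const.mul hFc.abs).integrableOn_Ioc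
    have I2 : (∫ t, (vallee (2*n) t - vallee n t - T t) * (vallee (2*n) t - vallee n t) ∂μ)
        ≤ ∫ t, E.toReal * |vallee (2*n) t - vallee n t| ∂μ := by
      apply integral_mono_ae hInt1 hInt2
      filter_upwards [hae] with x hx
      calc (vallee (2*n) x - vallee n x - T x) * (vallee (2*n) x - vallee n x)
          ≤ |(vallee (2*n) x - vallee n x - T x) * (vallee (2*n) x - vallee n x)| :=
            le_abs_self _
        _ = |vallee (2*n) x - vallee n x - T x| * |vallee (2*n) x - vallee n x| := abs_mul _ _
        _ ≤ E.toReal * |vallee (2*n) x - vallee n x| :=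
            mul_le_mul_of_nonneg_right hx (abs_nonneg _)
    have I4 : (∫ t, |vallee (2*n) t - vallee n t| ∂μ) ≤ 6 * π := by
      rw [hμ, ← intervalIntegral.integral_of_le hle]
      exact f_L1_bound n hn
    have I3 : (∫ t, E.toReal * |vallee (2*n) t - vallee n t| ∂μ) ≤ E.toReal * (6*π) := by
      rw [MeasureTheory.integral_const_mul]
      exact mul_le_mul_of_nonneg_left I4 ENNReal.toReal_nonneg
    have hfinal : π * n / 4 ≤ E.toReal * (6*π) := le_trans hlow (le_trans I2 I3)
    rw [hqnorm, hp'1]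
    norm_num
    nlinarith [hfinal, hπ]
  · -- finite p
    set P := p.toReal with hP
    have hP1 : 1 < P := by
      rw [hP, ← ENNReal.toReal_one]
      exact (ENNReal.toReal_lt_toReal ENNReal.one_ne_top hptop).mpr hp
    have hP0 : 0 < P := lt_trans one_pos hP1
    have hPinv : 1/P < 1 := by rw [div_lt_one hP0]; exact hP1
    have hPinvpos : 0 < 1/P := by positivity
    have h1p' : 1/p' = 1 - 1/P := by linarith
    have hp'pos : 0 < p' := by
      rcases lt_trichotomy p' 0 with hc | hc | hc
      · have : 1/p' < 0 := div_neg_of_pos_of_neg one_pos hc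
        linarith
      · exfalso; rw [hc, div_zero] at h1p'; linarith
      · exact hc
    have hq1 : 1 < p' := by
      have h2 : 1/p' < 1 := by linarith
      rwa [div_lt_one hp'pos] at h2
    have hconj : Real.HolderConjugate P p' := Real.holderConjugate_iff.mpr ⟨hP1, by
      rw [← one_div, ← one_div]; exact hpp'⟩
    have hD : (0:ℝ) < 4^((1:ℝ)-1/p') * (6*π)^(1/p') := by positivity
    refine ⟨π/4 / (4^((1:ℝ)-1/p') * (6*π)^(1/p')), by positivity, ?_⟩
    intro n hn T hT
    obtain ⟨hlow, hhc, C, hC⟩ := common n hn T hT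
    have hn0 : (0:ℝ) < n := by exact_mod_cast (by omega : 0 < n)
    have hFc : Continuous (fun t => vallee (2*n) t - vallee n t) :=
      (continuous_vallee (2*n)).sub (continuous_vallee n)
    set μ := volume.restrict (Set.Ioc (-π) π) with hμ
    have hmemh : MemLp (fun t => vallee (2*n) t - vallee n t - T t) p μ :=
      MemLp.of_bound hhc.aestronglyMeasurable C (ae_of_all _ (fun x => by
        rw [Real.norm_eq_abs]; exact hC x))
    have hmemh' : MemLp (fun t => vallee (2*n) t - vallee n t - T t) (ENNReal.ofReal P) μ := by
      rwa [hP, ENNReal.ofReal_toReal hptop]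
    have hmemF : MemLp (fun t => vallee (2*n) t - vallee n t) (ENNReal.ofReal p') μ :=
      MemLp.of_bound hFc.aestronglyMeasurable (4*n) (ae_of_all _ (fun x => by
        rw [Real.norm_eq_abs]; exact f_sup_bound n hn x))
    have hHolder := integral_mul_norm_le_Lp_mul_Lq hconj hmemh' hmemF
    have I1 : (∫ t, (vallee (2*n) t - vallee n t - T t) * (vallee (2*n) t - vallee n t) ∂μ)
        ≤ ∫ t, ‖vallee (2*n) t - vallee n t - T t‖ * ‖vallee (2*n) t - vallee n t‖ ∂μ := by
      apply integral_mono ((hhc.mul hFc).integrableOn_Ioc)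
        ((hhc.norm.mul hFc.norm).integrableOn_Ioc)
      intro x
      calc (vallee (2*n) x - vallee n x - T x) * (vallee (2*n) x - vallee n x)
          ≤ |(vallee (2*n) x - vallee n x - T x) * (vallee (2*n) x - vallee n x)| :=
            le_abs_self _
        _ = ‖vallee (2*n) x - vallee n x - T x‖ * ‖vallee (2*n) x - vallee n x‖ := by
            rw [abs_mul]; rfl
    have I4 : (∫ t, |vallee (2*n) t - vallee n t| ∂μ) ≤ 6 * π := by
      rw [hμ, ← intervalIntegral.integral_of_le hle]
      exact f_L1_bound n hn
    have IB : (∫ t, ‖vallee (2*n) t - vallee n t‖ ^ p' ∂μ)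
        ≤ (4*(n:ℝ))^(p'-1) * (6*π) := by
      have hptw : ∀ x, ‖vallee (2*n) x - vallee n x‖ ^ p'
          ≤ (4*(n:ℝ))^(p'-1) * |vallee (2*n) x - vallee n x| := by
        intro x
        rw [Real.norm_eq_abs]
        rcases eq_or_lt_of_le (abs_nonneg (vallee (2*n) x - vallee n x)) with h0 | h0
        · rw [← h0, Real.zero_rpow (by linarith : p' ≠ 0), mul_zero]
        · calc |vallee (2*n) x - vallee n x| ^ p'
              = |vallee (2*n) x - vallee n x| ^ (p'-1) * |vallee (2*n) x - vallee n x| := by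
                have h2 := Real.rpow_add h0 (p'-1) 1
                rw [Real.rpow_one] at h2
                rw [show p'-1+1 = p' from by ring] at h2
                exact h2
            _ ≤ (4*(n:ℝ))^(p'-1) * |vallee (2*n) x - vallee n x| := by
                apply mul_le_mul_of_nonneg_right _ (abs_nonneg _)
                apply Real.rpow_le_rpow (abs_nonneg _) _ (by linarith : (0:ℝ) ≤ p'-1)
                have := f_sup_bound n hn x
                linarith
      calc (∫ t, ‖vallee (2*n) t - vallee n t‖ ^ p' ∂μ)
          ≤ ∫ t, (4*(n:ℝ))^(p'-1) * |vallee (2*n) t - vallee n t| ∂μ := by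
            apply integral_mono _ ((continuous_const.mul hFc.abs).integrableOn_Ioc) hptw
            exact ((hFc.norm.rpow_const (fun x => Or.inr (by linarith : (0:ℝ) ≤ p')))).integrableOn_Ioc
        _ = (4*(n:ℝ))^(p'-1) * ∫ t, |vallee (2*n) t - vallee n t| ∂μ := MeasureTheory.integral_const_mul _ _
        _ ≤ (4*(n:ℝ))^(p'-1) * (6*π) := by
            apply mul_le_mul_of_nonneg_left I4 (Real.rpow_nonneg (by positivity) _)
    have hAnn : (0:ℝ) ≤ (∫ t, ‖vallee (2*n) t - vallee n t - T t‖ ^ P ∂μ) ^ (1/P) :=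
      Real.rpow_nonneg (integral_nonneg (fun x => Real.rpow_nonneg (norm_nonneg _) _)) _
    have hA : qnorm p (fun t => vallee (2*n) t - vallee n t - T t)
        = (∫ t, ‖vallee (2*n) t - vallee n t - T t‖ ^ P ∂μ) ^ (1/P) := by
      rw [qnorm, ← hμ, MemLp.eLpNorm_eq_integral_rpow_norm (by
          exact (lt_trans zero_lt_one hp).ne') hptop hmemh, ← hP, one_div]
      exact ENNReal.toReal_ofReal (Real.rpow_nonneg
        (integral_nonneg (fun x => Real.rpow_nonneg (norm_nonneg _) _)) _)
    have hB : (∫ t, ‖vallee (2*n) t - vallee n t‖ ^ p' ∂μ) ^ (1/p')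
        ≤ ((4*(n:ℝ))^(p'-1) * (6*π)) ^ (1/p') :=
      Real.rpow_le_rpow (integral_nonneg (fun x => Real.rpow_nonneg (norm_nonneg _) _))
        IB (by positivity)
    have hK : ((4*(n:ℝ))^(p'-1) * (6*π)) ^ (1/p')
        = 4^((1:ℝ)-1/p') * (n:ℝ)^((1:ℝ)-1/p') * (6*π)^(1/p') := by
      rw [Real.mul_rpow (Real.rpow_nonneg (by positivity) _) (by positivity)]
      rw [← Real.rpow_mul (by positivity : (0:ℝ) ≤ 4*(n:ℝ))]
      have he : (p'-1) * (1/p') = 1 - 1/p' := by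
        field_simp
      rw [he, Real.mul_rpow (by norm_num : (0:ℝ) ≤ 4) (le_of_lt hn0)]
    have chain : π * n / 4
        ≤ (∫ t, ‖vallee (2*n) t - vallee n t - T t‖ ^ P ∂μ) ^ (1/P)
          * (4^((1:ℝ)-1/p') * (n:ℝ)^((1:ℝ)-1/p') * (6*π)^(1/p')) := by
      calc π * n / 4
          ≤ ∫ t, (vallee (2*n) t - vallee n t - T t) * (vallee (2*n) t - vallee n t) ∂μ := hlow
        _ ≤ ∫ t, ‖vallee (2*n) t - vallee n t - T t‖ * ‖vallee (2*n) t - vallee n t‖ ∂μ := I1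
        _ ≤ (∫ t, ‖vallee (2*n) t - vallee n t - T t‖ ^ P ∂μ) ^ (1/P)
            * (∫ t, ‖vallee (2*n) t - vallee n t‖ ^ p' ∂μ) ^ (1/p') := hHolder
        _ ≤ (∫ t, ‖vallee (2*n) t - vallee n t - T t‖ ^ P ∂μ) ^ (1/P)
            * (((4*(n:ℝ))^(p'-1)) * (6*π)) ^ (1/p') :=
            mul_le_mul_of_nonneg_left hB hAnn
        _ = _ := by rw [hK]
    have hnn : (n:ℝ)^(1/p') * (n:ℝ)^((1:ℝ)-1/p') = n := by
      rw [← Real.rpow_add hn0]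
      norm_num
    have hX : (0:ℝ) < 4^((1:ℝ)-1/p') * (n:ℝ)^((1:ℝ)-1/p') * (6*π)^(1/p') := by positivity
    have key : (π/4 / (4^((1:ℝ)-1/p') * (6*π)^(1/p'))) * (n:ℝ)^(1/p')
        * (4^((1:ℝ)-1/p') * (n:ℝ)^((1:ℝ)-1/p') * (6*π)^(1/p')) = π * n / 4 := by
      have h1 : (π/4 / (4^((1:ℝ)-1/p') * (6*π)^(1/p')))
          * (4^((1:ℝ)-1/p') * (6*π)^(1/p')) = π/4 := div_mul_cancel₀ _ hD.ne'
      calc (π/4 / (4^((1:ℝ)-1/p') * (6*π)^(1/p'))) * (n:ℝ)^(1/p')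
            * (4^((1:ℝ)-1/p') * (n:ℝ)^((1:ℝ)-1/p') * (6*π)^(1/p'))
          = ((π/4 / (4^((1:ℝ)-1/p') * (6*π)^(1/p')))
              * (4^((1:ℝ)-1/p') * (6*π)^(1/p'))) * ((n:ℝ)^(1/p') * (n:ℝ)^((1:ℝ)-1/p')) := by
            ring
        _ = (π/4) * n := by rw [h1, hnn]
        _ = π * n / 4 := by ring
    rw [hA]
    apply le_of_mul_le_mul_right _ hX
    rw [key]
    exact chain
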